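/- Greedy bag-filling correctness (condition set 2): Let v be an additive valuation over M, let B_1,...,B_n be disjoint bundles with v(B_k) ≤ 1 − ε/2 for all k, let the remaining items each satisfy |v(j)| < ε/2, and suppose v(M) ≥ n(1 − ε/2). Then the bag-filling procedure (for k = 1,...,n−1: while v(B_k) < 1 − ε add the minimum-valued unallocated small item to B_k; then give all remaining items to B_n) produces a partition A_1,...,A_n of M with v(A_k) ≥ 1 − ε for all k. -/

import Mathlib

open Finset
open scoped Classical

/-- `A` is a partition of the item set `M` into `n` (possibly empty) bundles. -/
def IsPartition {ι : Type*} [DecidableEq ι] (M : Finset ι) (n : ℕ)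
    (A : Fin n → Finset ι) : Prop :=
  (∀ k, A k ⊆ M) ∧ (∀ k l, k ≠ l → Disjoint (A k) (A l)) ∧ (∀ j ∈ M, ∃ k, j ∈ A k)

/-- `μ` is the maximin share of the additive valuation `v` over `M` with `n` bundles:
some partition attains minimum bundle value at least `μ`, and every partition has a
bundle of value at most `μ`. -/
def IsMMS {ι : Type*} [DecidableEq ι] (v : ι → ℝ) (M : Finset ι) (n : ℕ) (μ : ℝ) : Prop :=
  (∃ A : Fin n → Finset ι, IsPartition M n A ∧ ∀ k, μ ≤ ∑ j ∈ A k, v j) ∧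
  (∀ A : Fin n → Finset ι, IsPartition M n A → ∃ k, ∑ j ∈ A k, v j ≤ μ)


/-- Fill a bag `S` with items from `T` (all of absolute value `< ε/2`) until its
value lies in `[1-ε, 1-ε/2]`. -/
lemma fill_one {ι : Type*} [DecidableEq ι] (v : ι → ℝ) (ε : ℝ) (hε : 0 < ε) :
    ∀ T S : Finset ι, Disjoint S T →
      (∀ j ∈ T, |v j| < ε / 2) → ∑ j ∈ S, v j ≤ 1 - ε / 2 →
      1 - ε ≤ ∑ j ∈ S, v j + ∑ j ∈ T, v j →
      ∃ S', S ⊆ S' ∧ S' ⊆ S ∪ T ∧ 1 - ε ≤ ∑ j ∈ S', v j ∧ ∑ j ∈ S', v j ≤ 1 - ε / 2 := by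
  intro T
  induction T using Finset.strongInduction with
  | _ T ih =>
    intro S hdisj hsm hSle hge
    by_cases h : 1 - ε ≤ ∑ j ∈ S, v j
    · exact ⟨S, subset_rfl, Finset.subset_union_left, h, hSle⟩
    · push_neg at h
      have hTne : T.Nonempty := by
        rcases T.eq_empty_or_nonempty with rfl | h'
        · simp only [Finset.sum_empty, add_zero] at hge; linarith
        · exact h'
      obtain ⟨t, ht⟩ := hTne
      have htS : t ∉ S := fun hc => (Finset.disjoint_left.mp hdisj hc ht)
      have hvt := abs_lt.mp (hsm t ht)
      have hsum : ∑ j ∈ insert t S, v j = v t + ∑ j ∈ S, v j := Finset.sum_insert htS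
      have herase : ∑ j ∈ T.erase t, v j + v t = ∑ j ∈ T, v j :=
        Finset.sum_erase_add _ _ ht
      obtain ⟨S', h1, h2, h3, h4⟩ := ih (T.erase t) (Finset.erase_ssubset ht) (insert t S)
        (by
          rw [Finset.disjoint_insert_left]
          exact ⟨Finset.notMem_erase t T, hdisj.mono_right (Finset.erase_subset t T)⟩)
        (fun j hj => hsm j (Finset.mem_of_mem_erase hj))
        (by rw [hsum]; linarith)
        (by rw [hsum]; linarith)
      refine ⟨S', (Finset.subset_insert t S).trans h1, ?_, h3, h4⟩
      refine h2.trans ?_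
      intro x hx
      rcases Finset.mem_union.mp hx with hx | hx
      · rcases Finset.mem_insert.mp hx with rfl | hx
        · exact Finset.mem_union_right _ ht
        · exact Finset.mem_union_left _ hx
      · exact Finset.mem_union_right _ (Finset.mem_of_mem_erase hx)

lemma bag_aux {ι : Type*} [DecidableEq ι] (v : ι → ℝ) (ε : ℝ) (hε : 0 < ε) (hε1 : ε < 1) :
    ∀ n, 1 ≤ n → ∀ M : Finset ι, ∀ B : Fin n → Finset ι,
      (∀ k, B k ⊆ M) → (∀ k l, k ≠ l → Disjoint (B k) (B l)) →
      (∀ k, ∑ j ∈ B k, v j ≤ 1 - ε / 2) →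
      (∀ j ∈ M, (∀ k, j ∉ B k) → |v j| < ε / 2) →
      (n : ℝ) * (1 - ε / 2) ≤ ∑ j ∈ M, v j →
      ∃ A : Fin n → Finset ι, IsPartition M n A ∧ (∀ k, B k ⊆ A k) ∧
        ∀ k, 1 - ε ≤ ∑ j ∈ A k, v j := by
  intro n hn
  induction n, hn using Nat.le_induction with
  | base =>
    intro M B hBsub hBdisj hBval hsm htot
    refine ⟨fun _ => M, ⟨fun _ => subset_rfl, fun k l hkl =>
      absurd (Subsingleton.elim k l) hkl, fun j hj => ⟨0, hj⟩⟩,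
      fun k => hBsub k, fun _ => ?_⟩
    push_cast at htot
    linarith
  | succ n hn ih =>
    intro M B hBsub hBdisj hBval hsm htot
    set W : Finset ι := (Finset.univ.erase (0 : Fin (n + 1))).biUnion B with hW
    have hWsub : W ⊆ M := Finset.biUnion_subset.mpr fun k _ => hBsub k
    have hWsum : ∑ j ∈ W, v j = ∑ k ∈ Finset.univ.erase (0 : Fin (n + 1)), ∑ j ∈ B k, v j :=
      Finset.sum_biUnion (fun k _ l _ hkl => hBdisj k l hkl)
    have hWle : ∑ j ∈ W, v j ≤ (n : ℝ) * (1 - ε / 2) := by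
      rw [hWsum]
      have hcard : (Finset.univ.erase (0 : Fin (n + 1))).card = n := by
        rw [Finset.card_erase_of_mem (Finset.mem_univ _), Finset.card_univ, Fintype.card_fin]
        omega
      calc ∑ k ∈ Finset.univ.erase (0 : Fin (n + 1)), ∑ j ∈ B k, v j
          ≤ (Finset.univ.erase (0 : Fin (n + 1))).card • (1 - ε / 2) :=
            Finset.sum_le_card_nsmul _ _ _ (fun k _ => hBval k)
        _ = (n : ℝ) * (1 - ε / 2) := by rw [hcard, nsmul_eq_mul]
    set U : Finset ι := M \ W with hU
    have hUval : 1 - ε / 2 ≤ ∑ j ∈ U, v j := by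
      have := Finset.sum_sdiff (f := v) hWsub
      push_cast at htot
      linarith
    have hB0U : B 0 ⊆ U := by
      intro x hx
      refine Finset.mem_sdiff.mpr ⟨hBsub 0 hx, ?_⟩
      intro hxW
      obtain ⟨k, hk, hxk⟩ := Finset.mem_biUnion.mp hxW
      have hk0 : k ≠ 0 := Finset.ne_of_mem_erase hk
      exact Finset.disjoint_left.mp (hBdisj 0 k (Ne.symm hk0)) hx hxk
    have hdisj0 : Disjoint (B 0) (U \ B 0) := Finset.disjoint_sdiff
    have hsmT : ∀ j ∈ U \ B 0, |v j| < ε / 2 := by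
      intro j hj
      obtain ⟨hjU, hjB0⟩ := Finset.mem_sdiff.mp hj
      obtain ⟨hjM, hjW⟩ := Finset.mem_sdiff.mp hjU
      refine hsm j hjM fun k => ?_
      intro hjk
      rcases eq_or_ne k 0 with rfl | hk0
      · exact hjB0 hjk
      · exact hjW (Finset.mem_biUnion.mpr ⟨k, Finset.mem_erase.mpr ⟨hk0, Finset.mem_univ _⟩, hjk⟩)
    have hUsum : ∑ j ∈ B 0, v j + ∑ j ∈ U \ B 0, v j = ∑ j ∈ U, v j := by
      rw [add_comm]; exact Finset.sum_sdiff hB0U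
    obtain ⟨A0, hA0B, hA0sub, hA0lo, hA0hi⟩ := fill_one v ε hε (U \ B 0) (B 0)
      hdisj0 hsmT (hBval 0) (by rw [hUsum]; linarith)
    have hA0U : A0 ⊆ U := by
      refine hA0sub.trans ?_
      intro x hx
      rcases Finset.mem_union.mp hx with hx | hx
      · exact hB0U hx
      · exact (Finset.sdiff_subset) hx
    have hA0M : A0 ⊆ M := hA0U.trans (Finset.sdiff_subset)
    -- apply induction hypothesis to the rest
    have hBsucc : ∀ k : Fin n, B k.succ ⊆ M \ A0 := by
      intro k x hx
      refine Finset.mem_sdiff.mpr ⟨hBsub k.succ hx, fun hxA => ?_⟩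
      have hxU := hA0U hxA
      exact (Finset.mem_sdiff.mp hxU).2
        (Finset.mem_biUnion.mpr ⟨k.succ, Finset.mem_erase.mpr ⟨Fin.succ_ne_zero k, Finset.mem_univ _⟩, hx⟩)
    have htot' : (n : ℝ) * (1 - ε / 2) ≤ ∑ j ∈ M \ A0, v j := by
      have := Finset.sum_sdiff (f := v) hA0M
      push_cast at htot
      linarith
    obtain ⟨A', ⟨hA'sub, hA'disj, hA'cov⟩, hA'B, hA'val⟩ := ih (M \ A0) (fun k => B k.succ)
      hBsucc
      (fun k l hkl => hBdisj k.succ l.succ (fun h => hkl (Fin.succ_injective n h)))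
      (fun k => hBval k.succ)
      (by
        intro j hj hjB
        obtain ⟨hjM, hjA0⟩ := Finset.mem_sdiff.mp hj
        refine hsm j hjM fun k => ?_
        induction k using Fin.cases with
        | zero => exact fun hjk => hjA0 (hA0B hjk)
        | succ k => exact hjB k)
      htot'
    refine ⟨Fin.cases A0 A', ⟨?_, ?_, ?_⟩, ?_, ?_⟩
    · intro k
      induction k using Fin.cases with
      | zero => simpa using hA0M
      | succ k => simpa using (hA'sub k).trans (Finset.sdiff_subset)
    · intro k l hkl
      induction k using Fin.cases with
      | zero =>
        induction l using Fin.cases with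
        | zero => exact absurd rfl hkl
        | succ l =>
          simp only [Fin.cases_zero, Fin.cases_succ]
          exact Finset.disjoint_left.mpr fun x hx hx' =>
            (Finset.mem_sdiff.mp (hA'sub l hx')).2 hx
      | succ k =>
        induction l using Fin.cases with
        | zero =>
          simp only [Fin.cases_zero, Fin.cases_succ]
          exact Finset.disjoint_left.mpr fun x hx hx' =>
            (Finset.mem_sdiff.mp (hA'sub k hx)).2 hx'
        | succ l =>
          simp only [Fin.cases_succ]
          exact hA'disj k l (fun h => hkl (by rw [h]))
    · intro j hj
      by_cases hjA0 : j ∈ A0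
      · exact ⟨0, by simpa using hjA0⟩
      · obtain ⟨k, hk⟩ := hA'cov j (Finset.mem_sdiff.mpr ⟨hj, hjA0⟩)
        exact ⟨k.succ, by simpa using hk⟩
    · intro k
      induction k using Fin.cases with
      | zero => simpa using hA0B
      | succ k => simpa using hA'B k
    · intro k
      induction k using Fin.cases with
      | zero => simpa using hA0lo
      | succ k => simpa using hA'val k

/-- Bag-filling correctness (condition set 2): if `v(M) ≥ n(1 - ε/2)`, the disjoint
initial bags `B k ⊆ M` each have value at most `1 - ε/2`, and all remaining (small)
items satisfy `|v j| < ε/2`, then there is a partition `A` of `M` extending the bags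
with every bundle of value at least `1 - ε`. -/
theorem bag_filling_cond2 {ι : Type*} [DecidableEq ι] (v : ι → ℝ) (M : Finset ι)
    (n : ℕ) (hn : 1 ≤ n) (ε : ℝ) (hε : 0 < ε) (hε1 : ε < 1)
    (B : Fin n → Finset ι) (hBsub : ∀ k, B k ⊆ M)
    (hBdisj : ∀ k l, k ≠ l → Disjoint (B k) (B l))
    (hBval : ∀ k, ∑ j ∈ B k, v j ≤ 1 - ε / 2)
    (hsmall : ∀ j ∈ M, (∀ k, j ∉ B k) → |v j| < ε / 2)
    (htot : (n : ℝ) * (1 - ε / 2) ≤ ∑ j ∈ M, v j) :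
    ∃ A : Fin n → Finset ι, IsPartition M n A ∧ (∀ k, B k ⊆ A k) ∧
      (∀ k, 1 - ε ≤ ∑ j ∈ A k, v j) := by
  exact bag_aux v ε hε hε1 n hn M B hBsub hBdisj hBval hsmall htot
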